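/- Let τ = (τ, A, a) be a primitive substitution with fixed point X, and let u be a non-empty prefix of X. Then the derived sequence D_u(X) is the fixed point of a primitive substitution τ_u on the alphabet R_u of return-word symbols, and τ_u is the unique morphism satisfying Θ_u ∘ τ_u = τ ∘ Θ_u. -/

import Mathlib

namespace Cobham

open Filter

variable {A : Type*} {B : Type*}

/-- The factor `X_i X_{i+1} ... X_{i+n-1}` of the sequence `X`. -/
def word (X : ℕ → A) (i n : ℕ) : List A := (List.range n).map fun k => X (i + k)

/-- `u` occurs in `X` at position `i`. -/
def OccursAt (X : ℕ → A) (u : List A) (i : ℕ) : Prop := word X i u.length = u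

def IsFactor (X : ℕ → A) (u : List A) : Prop := ∃ i, OccursAt X u i

def IsPrefix (X : ℕ → A) (u : List A) : Prop := OccursAt X u 0

/-- Uniformly recurrent: gaps between successive occurrences of any factor are bounded. -/
def UnifRec (X : ℕ → A) : Prop :=
  ∀ u, IsFactor X u → ∃ g : ℕ, ∀ i : ℕ, ∃ j, i ≤ j ∧ j ≤ i + g ∧ OccursAt X u j

/-- Return words on `u`: factors between two successive occurrences of `u` in `X`. -/
def ReturnWords (X : ℕ → A) (u : List A) : Set (List A) :=
  { v | ∃ i j, OccursAt X u i ∧ OccursAt X u j ∧ i < j ∧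
      (∀ k, i < k → k < j → ¬ OccursAt X u k) ∧ v = word X i (j - i) }

/-- Application of a morphism to a word, by concatenation. -/
def wordApply (σ : A → List B) (w : List A) : List B := w.flatMap σ

/-- Iterate of a morphism. -/
def mPow (σ : A → List A) : ℕ → A → List A
  | 0 => fun a => [a]
  | k + 1 => fun a => wordApply σ (mPow σ k a)

def Nonerasing (σ : A → List A) : Prop := ∀ a, σ a ≠ []

/-- Primitivity: some power of the morphism maps every letter to a word
containing every letter. -/
def Primitive (σ : A → List A) : Prop := ∃ k, 0 < k ∧ ∀ a b : A, b ∈ mPow σ k a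

/-- Primitivity restricted to a set of letters. -/
def PrimitiveOn (σ : A → List A) (S : Set A) : Prop :=
  ∃ k, 0 < k ∧ ∀ a ∈ S, ∀ b ∈ S, b ∈ mPow σ k a

/-- `X` is a fixed point of `σ`: the image of every prefix of `X` is a prefix of `X`. -/
def IsFixedPt (σ : A → List A) (X : ℕ → A) : Prop :=
  ∀ n, OccursAt X (wordApply σ (word X 0 n)) 0

def UltPeriodic (X : ℕ → A) : Prop :=
  ∃ N p : ℕ, 0 < p ∧ ∀ n, N ≤ n → X (n + p) = X n

def Periodic (X : ℕ → A) : Prop := ∃ p : ℕ, 0 < p ∧ ∀ n, X (n + p) = X n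

/-- `u` occurs at position `i` inside the word `w`. -/
def WOcc (u w : List A) (i : ℕ) : Prop :=
  i + u.length ≤ w.length ∧ (w.drop i).take u.length = u

/-- `D` is the derived sequence of `X` on `u`: a sequence of return words on `u`
whose concatenation is `X`. -/
def IsDerived (X : ℕ → A) (u : List A) (D : ℕ → List A) : Prop :=
  (∀ n, D n ∈ ReturnWords X u) ∧ ∀ n, OccursAt X ((word D 0 n).flatten) 0

/-- `τu` is the return substitution of `τ` on `u` (on the alphabet of return words):
`Θ_u ∘ τ_u = τ ∘ Θ_u`. -/
def RetSub (τ : A → List A) (X : ℕ → A) (u : List A)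
    (τu : List A → List (List A)) : Prop :=
  ∀ r ∈ ReturnWords X u,
    (∀ s ∈ τu r, s ∈ ReturnWords X u) ∧ (τu r).flatten = wordApply τ r

/-- Eigenvalue of a complex matrix. -/
def IsEig {n : Type*} [Fintype n] (M : Matrix n n ℂ) (μ : ℂ) : Prop :=
  ∃ v : n → ℂ, v ≠ 0 ∧ M.mulVec v = μ • v

/-- Incidence matrix of a morphism, as a complex matrix. -/
def incMat [Fintype A] [DecidableEq A] (σ : A → List A) : Matrix A A ℂ :=
  Matrix.of fun i j => (((σ j).count i : ℕ) : ℂ)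

/-- Incidence matrix of a return substitution, indexed by the set of return words. -/
def retMat [DecidableEq A] (τu : List A → List (List A)) (S : Set (List A))
    [Fintype S] : Matrix S S ℂ :=
  Matrix.of fun i j => (((τu (j : List A)).count (i : List A) : ℕ) : ℂ)

/-- `α` is the dominant eigenvalue of the incidence matrix of `σ`. -/
def IsDomEig [Fintype A] [DecidableEq A] (σ : A → List A) (α : ℝ) : Prop :=
  IsEig (incMat σ) (α : ℂ) ∧ ∀ μ : ℂ, IsEig (incMat σ) μ → ‖μ‖ ≤ α

/-- `X` is `α`-substitutive: the image under a letter-to-letter morphism of the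
fixed point of a primitive substitution with dominant eigenvalue `α`. -/
def IsSubstitutiveWith {A : Type*} (α : ℝ) (X : ℕ → A) : Prop :=
  ∃ (C : Type) (hF : Fintype C) (hD : DecidableEq C) (σ : C → List C) (c : C)
    (Y : ℕ → C) (ψ : C → A),
    Nonerasing σ ∧ (σ c).head? = some c ∧ Primitive σ ∧
    Y 0 = c ∧ IsFixedPt σ Y ∧ (∀ n, X n = ψ (Y n)) ∧ @IsDomEig C hF hD σ α

/-- Perron number: a real algebraic integer `α ≥ 1` strictly dominating the
absolute values of its other conjugates. -/
def IsPerron (α : ℝ) : Prop :=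
  1 ≤ α ∧ IsIntegral ℤ α ∧
    ∀ β : ℂ, Polynomial.aeval β (minpoly ℤ α) = 0 → β ≠ (α : ℂ) → ‖β‖ < α

@[simp] lemma word_length (X : ℕ → A) (i n : ℕ) : (word X i n).length = n := by
  simp [word]

@[simp] lemma word_zero (X : ℕ → A) (i : ℕ) : word X i 0 = [] := by simp [word]

@[simp] lemma word_one (X : ℕ → A) (i : ℕ) : word X i 1 = [X i] := by
  simp [word, List.range_succ]

lemma word_succ (X : ℕ → A) (i n : ℕ) : word X i (n + 1) = word X i n ++ [X (i + n)] := by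
  simp [word, List.range_succ]

lemma word_append (X : ℕ → A) (i m n : ℕ) :
    word X i (m + n) = word X i m ++ word X (i + m) n := by
  induction n with
  | zero => simp
  | succ n ih =>
    rw [← Nat.add_assoc, word_succ, ih, word_succ, List.append_assoc, Nat.add_assoc]

@[simp] lemma word_getElem (X : ℕ → A) (i n t : ℕ) (h : t < (word X i n).length) :
    (word X i n)[t] = X (i + t) := by
  simp [word]

lemma word_congr {X Y : ℕ → A} {i j n : ℕ} (h : ∀ t, t < n → X (i + t) = Y (j + t)) :
    word X i n = word Y j n := by
  apply List.ext_getElem (by simp)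
  intro t ht _
  simp only [word_getElem]
  exact h t (by simpa using ht)

lemma word_split (X : ℕ → A) {i j : ℕ} (hij : i ≤ j) :
    word X 0 j = word X 0 i ++ word X i (j - i) := by
  conv_lhs => rw [show j = i + (j - i) by omega]
  rw [word_append, Nat.zero_add]

lemma mem_word {X : ℕ → A} {b : A} {i n : ℕ} :
    b ∈ word X i n ↔ ∃ t, t < n ∧ X (i + t) = b := by
  simp [word, List.mem_map]

lemma word_take (X : ℕ → A) (i n m : ℕ) :
    (word X i n).take m = word X i (min m n) := by
  rcases le_total m n with h | h
  · rw [min_eq_left h]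
    obtain ⟨c, rfl⟩ := Nat.exists_eq_add_of_le h
    rw [word_append]
    exact List.take_left' (word_length X i m)
  · rw [min_eq_right h, List.take_of_length_le (by simpa using h)]

lemma word_drop (X : ℕ → A) (i n m : ℕ) :
    (word X i n).drop m = word X (i + m) (n - m) := by
  rcases le_total m n with h | h
  · obtain ⟨c, rfl⟩ := Nat.exists_eq_add_of_le h
    rw [word_append]
    rw [List.drop_left' (word_length X i m)]
    simp
  · rw [List.drop_of_length_le (by simpa using h), Nat.sub_eq_zero_of_le h, word_zero]

lemma word_sub {X Y : ℕ → A} {i j c : ℕ} (h : word X i c = word Y j c)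
    {p q : ℕ} (hpq : p + q ≤ c) : word X (i + p) q = word Y (j + p) q := by
  apply word_congr
  intro t ht
  have h1 : p + t < c := by omega
  have := congrArg (fun l => l[p + t]?) h
  simp only [word, List.getElem?_map, List.getElem?_range h1] at this
  simpa [Nat.add_assoc] using this

lemma word_infix_word {X : ℕ → A} {i p c c' : ℕ} (h1 : i ≤ p) (h2 : p + c' ≤ i + c) :
    word X p c' <:+: word X i c := by
  refine ⟨word X i (p - i), word X (p + c') (i + c - (p + c')), ?_⟩
  have e0 : c = (p - i) + (c' + (i + c - (p + c'))) := by omega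
  have e1 : i + (p - i) = p := by omega
  rw [e0, word_append, word_append, e1, ← List.append_assoc]
  have e2 : i + (p - i + (c' + (i + c - (p + c')))) - (p + c') = i + c - (p + c') := by omega
  rw [e2]

lemma occ_of_infix {X : ℕ → A} {v : List A} {q c : ℕ} (h : v <:+: word X q c) :
    ∃ p, p + v.length ≤ c ∧ word X (q + p) v.length = v := by
  obtain ⟨s, t, hst⟩ := h
  have hlen : s.length + v.length + t.length = c := by
    have := congrArg List.length hst
    simpa [Nat.add_assoc] using this
  refine ⟨s.length, by omega, ?_⟩
  have h2 : word X q c = word X q s.length ++ word X (q + s.length) (c - s.length) := by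
    conv_lhs => rw [show c = s.length + (c - s.length) by omega]
    rw [word_append]
  rw [← hst] at h2
  have h2' : s ++ (v ++ t) = word X q s.length ++ word X (q + s.length) (c - s.length) := by
    simpa [List.append_assoc] using h2
  have h4 : v ++ t = word X (q + s.length) (c - s.length) :=
    (List.append_inj h2' (by simp)).2
  have := congrArg (List.take v.length) h4
  rw [List.take_left' rfl, word_take, min_eq_left (by omega)] at this
  exact this.symm

-- wordApply lemmas
@[simp] lemma wordApply_nil (σ : A → List B) : wordApply σ [] = [] := rfl

lemma wordApply_cons (σ : A → List B) (b : A) (w : List A) :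
    wordApply σ (b :: w) = σ b ++ wordApply σ w := rfl

lemma wordApply_append (σ : A → List B) (w w' : List A) :
    wordApply σ (w ++ w') = wordApply σ w ++ wordApply σ w' := by
  simp [wordApply]

@[simp] lemma wordApply_singleton (σ : A → List B) (b : A) : wordApply σ [b] = σ b := by
  simp [wordApply]

@[simp] lemma wordApply_pure (w : List A) : wordApply (fun b => [b]) w = w := by
  induction w with
  | nil => rfl
  | cons b w ih => rw [wordApply_cons, ih]; rfl

lemma wordApply_comp (σ : B → List A) (ρ : A → List B) (w : List A) :
    wordApply σ (wordApply ρ w) = wordApply (fun b => wordApply σ (ρ b)) w := by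
  simp [wordApply, List.flatMap_assoc]

lemma wordApply_length_ge {σ : A → List B} (hσ : ∀ b, σ b ≠ []) (w : List A) :
    w.length ≤ (wordApply σ w).length := by
  induction w with
  | nil => simp
  | cons b w ih =>
    rw [wordApply_cons, List.length_append, List.length_cons]
    have : 1 ≤ (σ b).length := List.length_pos_iff.mpr (hσ b)
    omega

lemma wordApply_infix {σ : A → List B} {w w' : List A} (h : w <:+: w') :
    wordApply σ w <:+: wordApply σ w' := by
  obtain ⟨s, t, rfl⟩ := h
  exact ⟨wordApply σ s, wordApply σ t, by rw [← wordApply_append, ← wordApply_append]⟩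

lemma wordApply_ne_nil {σ : A → List B} (hσ : ∀ b, σ b ≠ []) {w : List A} (hw : w ≠ []) :
    wordApply σ w ≠ [] := by
  cases w with
  | nil => exact absurd rfl hw
  | cons b w => simp [wordApply_cons, hσ b]

lemma flatten_length_ge {l : List (List A)} (h : ∀ r ∈ l, r ≠ []) :
    l.length ≤ l.flatten.length := by
  induction l with
  | nil => simp
  | cons r l ih =>
    simp only [List.flatten_cons, List.length_append, List.length_cons]
    have h1 : 1 ≤ r.length := List.length_pos_iff.mpr (h r (by simp))
    have h2 := ih (fun r hr => h r (by simp [hr]))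
    omega

section Morph
variable {τ : A → List A} {X : ℕ → A}

lemma occursAt_zero_iff {w : List A} : OccursAt X w 0 ↔ word X 0 w.length = w := Iff.rfl

lemma mPow_succ (σ : A → List A) (k : ℕ) (b : A) :
    mPow σ (k + 1) b = wordApply σ (mPow σ k b) := rfl

@[simp] lemma mPow_zero (σ : A → List A) (b : A) : mPow σ 0 b = [b] := rfl

lemma wordApply_mPow_succ (σ : A → List A) (k : ℕ) (w : List A) :
    wordApply (mPow σ (k + 1)) w = wordApply σ (wordApply (mPow σ k) w) := by
  rw [wordApply_comp]; rfl

lemma mPow_add (σ : A → List A) (p q : ℕ) (b : A) :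
    mPow σ (p + q) b = wordApply (mPow σ p) (mPow σ q b) := by
  induction p with
  | zero => rw [Nat.zero_add]; exact (wordApply_pure _).symm
  | succ p ih =>
    have h : p + 1 + q = (p + q) + 1 := by omega
    rw [h, mPow_succ, ih, ← wordApply_mPow_succ]

lemma nonerasing_mPow (hne : Nonerasing τ) (k : ℕ) : Nonerasing (mPow τ k) := by
  induction k with
  | zero => intro b; simp
  | succ k ih =>
    intro b
    rw [mPow_succ]
    exact wordApply_ne_nil hne (ih b)

lemma isFixedPt_mPow (hfix : IsFixedPt τ X) (k : ℕ) : IsFixedPt (mPow τ k) X := by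
  induction k with
  | zero =>
    intro n
    have h0 : wordApply (mPow τ 0) (word X 0 n) = word X 0 n := wordApply_pure _
    rw [occursAt_zero_iff, h0, word_length]
  | succ k ih =>
    intro n
    rw [occursAt_zero_iff, wordApply_mPow_succ]
    have h1 : word X 0 ((wordApply (mPow τ k) (word X 0 n)).length)
        = wordApply (mPow τ k) (word X 0 n) := ih n
    rw [← h1]
    exact hfix _

/-- length of the σ-image of the prefix of length `i`. -/
def phi (σ : A → List A) (X : ℕ → A) (i : ℕ) : ℕ := (wordApply σ (word X 0 i)).length

variable {σ : A → List A}

lemma word_phi (hσ : IsFixedPt σ X) (n : ℕ) :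
    word X 0 (phi σ X n) = wordApply σ (word X 0 n) := hσ n

@[simp] lemma phi_zero (σ : A → List A) (X : ℕ → A) : phi σ X 0 = 0 := by
  simp [phi]

lemma phi_add (σ : A → List A) (X : ℕ → A) {i j : ℕ} (hij : i ≤ j) :
    phi σ X j = phi σ X i + (wordApply σ (word X i (j - i))).length := by
  rw [phi, word_split X hij, wordApply_append, List.length_append]; rfl

lemma phi_succ (σ : A → List A) (X : ℕ → A) (i : ℕ) :
    phi σ X (i + 1) = phi σ X i + (σ (X i)).length := by
  rw [phi_add σ X (Nat.le_succ i)]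
  simp

lemma phi_mono (σ : A → List A) (X : ℕ → A) {i j : ℕ} (hij : i ≤ j) :
    phi σ X i ≤ phi σ X j := by
  rw [phi_add σ X hij]; omega

lemma phi_seg_ge (hσ : Nonerasing σ) (X : ℕ → A) {i j : ℕ} (hij : i ≤ j) :
    j - i ≤ phi σ X j - phi σ X i := by
  rw [phi_add σ X hij]
  have := wordApply_length_ge hσ (word X i (j - i))
  rw [word_length] at this
  omega

lemma phi_ge (hσ : Nonerasing σ) (X : ℕ → A) (i : ℕ) : i ≤ phi σ X i := by
  have := phi_seg_ge hσ X (Nat.zero_le i)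
  simpa using this

lemma phi_strictMono (hσ : Nonerasing σ) (X : ℕ → A) {i j : ℕ} (hij : i < j) :
    phi σ X i < phi σ X j := by
  have := phi_seg_ge hσ X (le_of_lt hij)
  have := phi_mono σ X (le_of_lt hij)
  omega

lemma image_seg (hσ : IsFixedPt σ X) {i j : ℕ} (hij : i ≤ j) :
    word X (phi σ X i) (phi σ X j - phi σ X i) = wordApply σ (word X i (j - i)) := by
  have hphi : phi σ X i ≤ phi σ X j := phi_mono σ X hij
  have h1 : word X 0 (phi σ X j)
      = word X 0 (phi σ X i) ++ word X (phi σ X i) (phi σ X j - phi σ X i) :=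
    word_split X hphi
  have h2 : word X 0 j = word X 0 i ++ word X i (j - i) := word_split X hij
  have h3 : word X 0 (phi σ X j) = word X 0 (phi σ X i) ++ wordApply σ (word X i (j - i)) := by
    rw [word_phi hσ, word_phi hσ, h2, wordApply_append]
  rw [h3] at h1
  exact (List.append_cancel_left h1).symm

lemma phi_iterate (hfix : IsFixedPt τ X) (κ : ℕ) (i : ℕ) :
    phi (mPow τ κ) X i = (phi τ X)^[κ] i := by
  induction κ with
  | zero =>
    have h0 : wordApply (mPow τ 0) (word X 0 i) = word X 0 i := wordApply_pure _
    simp [phi, h0]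
  | succ κ ih =>
    rw [Function.iterate_succ_apply', ← ih, phi, wordApply_mPow_succ,
      ← word_phi (isFixedPt_mPow hfix κ)]
    rfl

end Morph

section Core
variable {τ : A → List A} {X : ℕ → A} {u : List A}

structure Good (τ : A → List A) (X : ℕ → A) (u : List A) : Prop where
  hne : Nonerasing τ
  hpre : word X 0 u.length = u
  hu : u ≠ []
  hfix : IsFixedPt τ X
  hnext : ∀ i, ∃ j, i < j ∧ OccursAt X u j

/-- Return words are nonempty. -/
lemma RW_ne_nil {r : List A} (hr : r ∈ ReturnWords X u) : r ≠ [] := by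
  obtain ⟨i, j, _, _, hij, _, rfl⟩ := hr
  have : 0 < (word X i (j - i)).length := by rw [word_length]; omega
  exact List.ne_nil_of_length_pos this

/-- `u` is a prefix of `r ++ u` for return words `r`. -/
lemma RW_pref {r : List A} (hr : r ∈ ReturnWords X u) : u <+: r ++ u := by
  obtain ⟨i, j, hEi, hEj, hij, -, rfl⟩ := hr
  have e1 : i + (j - i) = j := by omega
  have h1 : word X i ((j - i) + u.length) = word X i (j - i) ++ u := by
    rw [word_append, e1, hEj]
  have h2 : (word X i ((j - i) + u.length)).take u.length = u := by
    rw [word_take, min_eq_left (by omega), hEi]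
  have h3 := List.take_prefix u.length (word X i ((j - i) + u.length))
  rw [h2, h1] at h3
  exact h3

/-- `u` has no interior occurrence in `r ++ u` for a return word `r`. -/
lemma RW_no_interior {r : List A} (hr : r ∈ ReturnWords X u) {p : ℕ}
    (h0 : 0 < p) (h1 : p < r.length) : ((r ++ u).drop p).take u.length ≠ u := by
  obtain ⟨i, j, hEi, hEj, hij, hcons, rfl⟩ := hr
  rw [word_length] at h1
  have e1 : i + (j - i) = j := by omega
  have h2 : word X i (j - i) ++ u = word X i ((j - i) + u.length) := by
    rw [word_append, e1, hEj]
  rw [h2, word_drop, word_take, min_eq_left (by omega)]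
  intro hocc
  exact hcons (i + p) (by omega) (by omega) hocc

lemma pref_glue {u r w : List A} (h1 : u <+: r ++ u) (h2 : u <+: w) : u <+: r ++ w := by
  have htake : u = (r ++ u).take u.length := by
    obtain ⟨z, hz⟩ := h1
    rw [← hz, List.take_left' rfl]
  rcases le_or_gt u.length r.length with h | h
  · have : u <+: r := by
      conv_lhs => rw [htake]
      rw [List.take_append,
        Nat.sub_eq_zero_of_le h, List.take_zero, List.append_nil]
      exact List.take_prefix _ _
    exact this.trans (List.prefix_append r w)
  · have hu2 : u = r ++ u.take (u.length - r.length) := by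
      conv_lhs => rw [htake]
      rw [List.take_append]
      congr 1
      exact List.take_of_length_le (by omega)
    have ht : u.take (u.length - r.length) <+: w := (List.take_prefix _ _).trans h2
    obtain ⟨w2, hw2⟩ := ht
    exact ⟨w2, ((congrArg (· ++ w2) hu2).trans
      (List.append_assoc r _ w2)).trans (congrArg (r ++ ·) hw2)⟩

lemma u_pref_flattenRW {l : List (List A)} (hall : ∀ r ∈ l, r ∈ ReturnWords X u) :
    u <+: l.flatten ++ u := by
  induction l with
  | nil => simp
  | cons r t ih =>
    rw [List.flatten_cons, List.append_assoc]
    exact pref_glue (RW_pref (hall r (by simp))) (ih fun s hs => hall s (by simp [hs]))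

lemma UD_aux {r r' : List A} {t t' : List (List A)} (hr : r ∈ ReturnWords X u)
    (hr' : r' ∈ ReturnWords X u)
    (ht : ∀ s ∈ t, s ∈ ReturnWords X u) (ht' : ∀ s ∈ t', s ∈ ReturnWords X u)
    (heq : r ++ t.flatten = r' ++ t'.flatten) : ¬ r.length < r'.length := by
  intro hlt
  obtain ⟨z, hz⟩ := u_pref_flattenRW ht
  obtain ⟨z', hz'⟩ := u_pref_flattenRW ht'
  apply RW_no_interior hr' (p := r.length) (List.length_pos_iff.mpr (RW_ne_nil hr)) hlt
  have key : r ++ (u ++ z) = (r' ++ u) ++ z' := by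
    calc r ++ (u ++ z) = r ++ (t.flatten ++ u) := by rw [hz]
      _ = (r ++ t.flatten) ++ u := by rw [List.append_assoc]
      _ = (r' ++ t'.flatten) ++ u := by rw [heq]
      _ = r' ++ (t'.flatten ++ u) := by rw [List.append_assoc]
      _ = r' ++ (u ++ z') := by rw [hz']
      _ = (r' ++ u) ++ z' := by rw [List.append_assoc]
  have d1 : (r ++ (u ++ z)).drop r.length = u ++ z := List.drop_left
  have d2 : ((r' ++ u) ++ z').drop r.length
      = (r' ++ u).drop r.length ++ z'.drop (r.length - (r' ++ u).length) :=
    List.drop_append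
  have hlen1 : u.length ≤ ((r' ++ u).drop r.length).length := by
    simp only [List.length_drop, List.length_append]; omega
  have t1 : ((r' ++ u).drop r.length ++ z'.drop (r.length - (r' ++ u).length)).take u.length
      = ((r' ++ u).drop r.length).take u.length := by
    rw [List.take_append, Nat.sub_eq_zero_of_le hlen1,
      List.take_zero, List.append_nil]
  have t2 : (u ++ z).take u.length = u := List.take_left' rfl
  rw [← t1, ← d2, ← key, d1, t2]

/-- unique decomposition into return words -/
lemma UD : ∀ l l' : List (List A), (∀ s ∈ l, s ∈ ReturnWords X u) →
    (∀ s ∈ l', s ∈ ReturnWords X u) → l.flatten = l'.flatten → l = l' := by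
  intro l
  induction l with
  | nil =>
    intro l' _ h' heq
    cases l' with
    | nil => rfl
    | cons r' t' =>
      exfalso
      rw [List.flatten_nil, List.flatten_cons] at heq
      exact RW_ne_nil (h' r' (by simp)) (List.append_eq_nil_iff.mp heq.symm).1
  | cons r t ih =>
    intro l' h h' heq
    cases l' with
    | nil =>
      exfalso
      rw [List.flatten_nil, List.flatten_cons] at heq
      exact RW_ne_nil (h r (by simp)) (List.append_eq_nil_iff.mp heq).1
    | cons r' t' =>
      rw [List.flatten_cons, List.flatten_cons] at heq
      have hmem := h r (by simp)
      have hmem' := h' r' (by simp)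
      have ht : ∀ s ∈ t, s ∈ ReturnWords X u := fun s hs => h s (by simp [hs])
      have ht' : ∀ s ∈ t', s ∈ ReturnWords X u := fun s hs => h' s (by simp [hs])
      have hlen : r.length = r'.length := by
        have n1 := UD_aux hmem hmem' ht ht' heq
        have n2 := UD_aux hmem' hmem ht' ht heq.symm
        omega
      obtain ⟨hr, hft⟩ := List.append_inj heq hlen
      rw [hr, ih t' ht ht' hft]

-- the next occurrence function
noncomputable def nxt (G : Good τ X u) (i : ℕ) : ℕ :=
  @Nat.find (fun j => i < j ∧ OccursAt X u j) (Classical.decPred _) (G.hnext i)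

lemma nxt_spec (G : Good τ X u) (i : ℕ) : i < nxt G i ∧ OccursAt X u (nxt G i) :=
  @Nat.find_spec (fun j => i < j ∧ OccursAt X u j) (Classical.decPred _) (G.hnext i)

lemma nxt_min (G : Good τ X u) {i j : ℕ} (hj : j < nxt G i) :
    ¬(i < j ∧ OccursAt X u j) :=
  @Nat.find_min (fun j => i < j ∧ OccursAt X u j) (Classical.decPred _) (G.hnext i) _ hj

lemma nxt_eq (G : Good τ X u) {i j : ℕ} (hij : i < j) (hEj : OccursAt X u j)
    (hmin : ∀ p, i < p → p < j → ¬ OccursAt X u p) : nxt G i = j := by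
  have h1 : nxt G i ≤ j :=
    @Nat.find_le _ (fun j => i < j ∧ OccursAt X u j) (Classical.decPred _) (G.hnext i) ⟨hij, hEj⟩
  rcases lt_or_eq_of_le h1 with h2 | h2
  · exact absurd (nxt_spec G i).2 (hmin _ (nxt_spec G i).1 h2)
  · exact h2

noncomputable def eS (G : Good τ X u) : ℕ → ℕ
  | 0 => 0
  | n + 1 => nxt G (eS G n)

@[simp] lemma eS_zero (G : Good τ X u) : eS G 0 = 0 := rfl

lemma eS_succ (G : Good τ X u) (n : ℕ) : eS G (n + 1) = nxt G (eS G n) := rfl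

lemma E_eS (G : Good τ X u) (n : ℕ) : OccursAt X u (eS G n) := by
  cases n with
  | zero => exact G.hpre
  | succ n => exact (nxt_spec G (eS G n)).2

lemma eS_strictMono (G : Good τ X u) : StrictMono (eS G) :=
  strictMono_nat_of_lt_succ fun n => (nxt_spec G (eS G n)).1

lemma eS_mono (G : Good τ X u) {m n : ℕ} (h : m ≤ n) : eS G m ≤ eS G n :=
  (eS_strictMono G).monotone h

lemma E_exists_idx (G : Good τ X u) : ∀ j, OccursAt X u j → ∃ n, eS G n = j := by
  intro j
  induction j using Nat.strong_induction_on with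
  | _ j ih =>
    intro hEj
    rcases Nat.eq_zero_or_pos j with rfl | hj
    · exact ⟨0, rfl⟩
    · set i := @Nat.findGreatest (fun p => OccursAt X u p) (Classical.decPred _) (j - 1) with hidef
      have hEi : OccursAt X u i :=
        @Nat.findGreatest_spec 0 (fun p => OccursAt X u p) (Classical.decPred _) (j - 1)
          (by omega) G.hpre
      have hile : i ≤ j - 1 := @Nat.findGreatest_le (fun p => OccursAt X u p) (Classical.decPred _) (j - 1)
      have hmin : ∀ p, i < p → p < j → ¬ OccursAt X u p := by
        intro p hp1 hp2 hEp
        exact @Nat.findGreatest_is_greatest p (fun p => OccursAt X u p) (Classical.decPred _)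
          (j - 1) hp1 (by omega) hEp
      obtain ⟨n, hn⟩ := ih i (by omega) hEi
      exact ⟨n + 1, by rw [eS_succ, hn, nxt_eq G (by omega) hEj hmin]⟩

noncomputable def DS (G : Good τ X u) (n : ℕ) : List A :=
  word X (eS G n) (eS G (n + 1) - eS G n)

lemma DS_mem_RW (G : Good τ X u) (n : ℕ) : DS G n ∈ ReturnWords X u := by
  refine ⟨eS G n, eS G (n + 1), E_eS G n, E_eS G (n + 1),
    eS_strictMono G (Nat.lt_succ_self n), ?_, rfl⟩
  intro k hk1 hk2 hEk
  exact nxt_min G (by rwa [← eS_succ]) ⟨hk1, hEk⟩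

lemma RW_iff (G : Good τ X u) {r : List A} :
    r ∈ ReturnWords X u ↔ ∃ n, DS G n = r := by
  constructor
  · rintro ⟨i, j, hEi, hEj, hij, hcons, rfl⟩
    obtain ⟨n, hn⟩ := E_exists_idx G i hEi
    refine ⟨n, ?_⟩
    rw [DS, hn, eS_succ, hn, nxt_eq G hij hEj hcons]
  · rintro ⟨n, rfl⟩
    exact DS_mem_RW G n

lemma flatten_word_DS (G : Good τ X u) (m : ℕ) :
    ∀ c, (word (DS G) m c).flatten = word X (eS G m) (eS G (m + c) - eS G m) := by
  intro c
  induction c with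
  | zero => simp
  | succ c ih =>
    have h1 : eS G m ≤ eS G (m + c) := eS_mono G (by omega)
    have h2 : eS G (m + c) ≤ eS G (m + c + 1) := eS_mono G (by omega)
    have key := word_append X (eS G m) (eS G (m + c) - eS G m) (eS G (m + c + 1) - eS G (m + c))
    rw [show eS G m + (eS G (m + c) - eS G m) = eS G (m + c) by omega] at key
    rw [show (eS G (m + c) - eS G m) + (eS G (m + c + 1) - eS G (m + c))
        = eS G (m + c + 1) - eS G m by omega] at key
    rw [show m + (c + 1) = (m + c) + 1 by omega, word_succ, List.flatten_append, ih]
    simp only [List.flatten_cons, List.flatten_nil, List.append_nil]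
    rw [key]
    rfl

-- X at occurrence positions
lemma X_eq_of_E (G : Good τ X u) {i : ℕ} (h : OccursAt X u i) : X i = X 0 := by
  have h0 : 0 < u.length := List.length_pos_iff.mpr G.hu
  have g1 : (word X i u.length)[0]? = u[0]? := congrArg (fun l => l[0]?) h
  have g2 : (word X 0 u.length)[0]? = u[0]? := congrArg (fun l => l[0]?) G.hpre
  rw [word, List.getElem?_map, List.getElem?_range h0] at g1 g2
  simp only [Option.map_some] at g1 g2
  rw [← g2] at g1
  simpa using g1

lemma u_pref_tauimg (G : Good τ X u) : u <+: wordApply τ u := by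
  have h1 : wordApply τ u = word X 0 (phi τ X u.length) := by
    conv_lhs => rw [← G.hpre]
    exact (word_phi G.hfix _).symm
  have h2 : (word X 0 (phi τ X u.length)).take u.length = u := by
    rw [word_take, min_eq_left (phi_ge G.hne X u.length), G.hpre]
  have h3 := List.take_prefix u.length (word X 0 (phi τ X u.length))
  rw [h2] at h3
  rw [h1]
  exact h3

lemma E_phi (G : Good τ X u) {i : ℕ} (hEi : OccursAt X u i) :
    OccursAt X u (phi τ X i) := by
  have hseg := image_seg G.hfix (i := i) (j := i + u.length) (by omega)
  rw [show i + u.length - i = u.length by omega] at hseg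
  rw [show word X i u.length = u from hEi] at hseg
  show word X (phi τ X i) u.length = u
  have hlen : u.length ≤ phi τ X (i + u.length) - phi τ X i := by
    have := phi_seg_ge G.hne X (i := i) (j := i + u.length) (by omega)
    omega
  have h3 := congrArg (List.take u.length) hseg
  rw [word_take, min_eq_left hlen] at h3
  rw [h3]
  obtain ⟨z, hz⟩ := u_pref_tauimg G
  rw [← hz, List.take_left' rfl]

noncomputable def psi (G : Good τ X u) (n : ℕ) : ℕ :=
  @dite _ (∃ m, eS G m = phi τ X (eS G n)) (Classical.dec _)
    (fun hx => Classical.choose hx) (fun _ => 0)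

lemma eS_psi (G : Good τ X u) (n : ℕ) : eS G (psi G n) = phi τ X (eS G n) := by
  have hx : ∃ m, eS G m = phi τ X (eS G n) :=
    E_exists_idx G _ (E_phi G (E_eS G n))
  unfold psi
  rw [dif_pos hx]
  exact Classical.choose_spec hx

lemma psi_strictMono (G : Good τ X u) : StrictMono (psi G) := by
  intro m n hmn
  have h1 : eS G (psi G m) < eS G (psi G n) := by
    rw [eS_psi, eS_psi]
    exact phi_strictMono G.hne X (eS_strictMono G hmn)
  exact (eS_strictMono G).lt_iff_lt.mp h1

@[simp] lemma psi_zero (G : Good τ X u) : psi G 0 = 0 := by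
  apply (eS_strictMono G).injective
  rw [eS_psi, eS_zero, phi_zero]

end Core
section Tauu
variable {τ : A → List A} {X : ℕ → A} {u : List A}

noncomputable def tauu (G : Good τ X u) (r : List A) : List (List A) :=
  @dite _ (∃ n, DS G n = r) (Classical.dec _)
    (fun hr => word (DS G) (psi G (Classical.choose hr))
      (psi G (Classical.choose hr + 1) - psi G (Classical.choose hr)))
    (fun _ => [])

lemma flatten_seg (G : Good τ X u) (n : ℕ) :
    (word (DS G) (psi G n) (psi G (n + 1) - psi G n)).flatten = wordApply τ (DS G n) := by
  have hps : psi G n ≤ psi G (n + 1) := (psi_strictMono G).monotone (by omega)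
  rw [flatten_word_DS, show psi G n + (psi G (n + 1) - psi G n) = psi G (n + 1) by omega,
    eS_psi, eS_psi]
  exact image_seg G.hfix (eS_mono G (by omega))

lemma mem_seg_RW (G : Good τ X u) {s : List A} {m c : ℕ}
    (hs : s ∈ word (DS G) m c) : s ∈ ReturnWords X u := by
  obtain ⟨t, -, rfl⟩ := mem_word.mp hs
  exact DS_mem_RW G _

lemma tauu_flatten (G : Good τ X u) {r : List A} (hr : ∃ n, DS G n = r) :
    (∀ s ∈ tauu G r, s ∈ ReturnWords X u) ∧ (tauu G r).flatten = wordApply τ r := by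
  have he : tauu G r = word (DS G) (psi G (Classical.choose hr))
      (psi G (Classical.choose hr + 1) - psi G (Classical.choose hr)) := by
    unfold tauu
    rw [dif_pos hr]
  constructor
  · intro s hs
    rw [he] at hs
    exact mem_seg_RW G hs
  · rw [he, flatten_seg, Classical.choose_spec hr]

lemma retsub (G : Good τ X u) : RetSub τ X u (tauu G) := fun r hr =>
  tauu_flatten G ((RW_iff G).mp hr)

lemma tauu_DS (G : Good τ X u) (n : ℕ) :
    tauu G (DS G n) = word (DS G) (psi G n) (psi G (n + 1) - psi G n) := by
  have hr : ∃ m, DS G m = DS G n := ⟨n, rfl⟩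
  apply UD
  · exact (tauu_flatten G hr).1
  · intro s hs
    exact mem_seg_RW G hs
  · rw [(tauu_flatten G hr).2, flatten_seg]

lemma flatMap_tauu (G : Good τ X u) (m : ℕ) : ∀ c,
    wordApply (tauu G) (word (DS G) m c)
      = word (DS G) (psi G m) (psi G (m + c) - psi G m) := by
  intro c
  induction c with
  | zero => simp [wordApply]
  | succ c ih =>
    have h1 : psi G m ≤ psi G (m + c) := (psi_strictMono G).monotone (by omega)
    have h2 : psi G (m + c) ≤ psi G (m + c + 1) := (psi_strictMono G).monotone (by omega)
    have key := word_append (DS G) (psi G m) (psi G (m + c) - psi G m)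
      (psi G (m + c + 1) - psi G (m + c))
    rw [show psi G m + (psi G (m + c) - psi G m) = psi G (m + c) by omega] at key
    rw [show (psi G (m + c) - psi G m) + (psi G (m + c + 1) - psi G (m + c))
        = psi G (m + c + 1) - psi G m by omega] at key
    rw [show m + (c + 1) = (m + c) + 1 by omega, word_succ, wordApply_append, ih,
      wordApply_singleton, tauu_DS, key]

lemma mPow_tauu (G : Good τ X u) (κ n : ℕ) :
    mPow (tauu G) κ (DS G n)
      = word (DS G) ((psi G)^[κ] n) ((psi G)^[κ] (n + 1) - (psi G)^[κ] n) := by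
  induction κ with
  | zero => simp [word_one]
  | succ κ ih =>
    have hmono : (psi G)^[κ] n ≤ (psi G)^[κ] (n + 1) :=
      ((psi_strictMono G).iterate κ).monotone (by omega)
    rw [mPow_succ, ih, flatMap_tauu,
      show (psi G)^[κ] n + ((psi G)^[κ] (n + 1) - (psi G)^[κ] n) = (psi G)^[κ] (n + 1) by omega,
      Function.iterate_succ_apply', Function.iterate_succ_apply']

lemma exists_derived (G : Good τ X u) : IsDerived X u (DS G) := by
  refine ⟨DS_mem_RW G, ?_⟩
  intro n
  show word X 0 _ = _
  rw [flatten_word_DS G 0 n]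
  simp

lemma derived_eq (G : Good τ X u) {D' : ℕ → List A} (hD' : IsDerived X u D') :
    ∀ n, D' n = DS G n := by
  set S : ℕ → ℕ := fun n => ((word D' 0 n).flatten).length with hSdef
  have hX0S : ∀ n, word X 0 (S n) = (word D' 0 n).flatten := fun n => hD'.2 n
  have hS0 : S 0 = 0 := by simp [hSdef]
  have hSadd : ∀ n c, S (n + c) = S n + ((word D' n c).flatten).length := by
    intro n c
    have hsplit : word D' 0 (n + c) = word D' 0 n ++ word D' n c := by
      rw [word_append, Nat.zero_add]
    simp only [hSdef, hsplit, List.flatten_append, List.length_append]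
  have hSmono : ∀ n c, S n ≤ S (n + c) := by
    intro n c
    rw [hSadd]
    omega
  have hwin : ∀ n c, word X (S n) (S (n + c) - S n) = (word D' n c).flatten := by
    intro n c
    have h1 : word X 0 (S (n + c)) = word X 0 (S n) ++ word X (S n) (S (n + c) - S n) :=
      word_split X (hSmono n c)
    have h2 : word X 0 (S (n + c)) = word X 0 (S n) ++ (word D' n c).flatten := by
      rw [hX0S, hX0S,
        show word D' 0 (n + c) = word D' 0 n ++ word D' n c from by rw [word_append, Nat.zero_add],
        List.flatten_append]
    exact List.append_cancel_left (h1.symm.trans h2)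
  have hpiece : ∀ n, word X (S n) (S (n + 1) - S n) = D' n := by
    intro n
    rw [hwin n 1, word_one]
    simp
  have hlenpos : ∀ n, 0 < (D' n).length :=
    fun n => List.length_pos_iff.mpr (RW_ne_nil (hD'.1 n))
  have hSsucc : ∀ n, S (n + 1) = S n + (D' n).length := by
    intro n
    rw [hSadd n 1, word_one]
    simp
  have hES : ∀ n, OccursAt X u (S n) := by
    intro n
    have hmemRW : ∀ s ∈ word D' n u.length, s ∈ ReturnWords X u := by
      intro s hs
      obtain ⟨t, -, rfl⟩ := mem_word.mp hs
      exact hD'.1 _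
    have hlenF : u.length ≤ ((word D' n u.length).flatten).length := by
      have h := flatten_length_ge (l := word D' n u.length)
        (fun s hs => RW_ne_nil (hmemRW s hs))
      rwa [word_length] at h
    have hdlen : S (n + u.length) - S n = ((word D' n u.length).flatten).length := by
      rw [hSadd]
      omega
    have h1 : word X (S n) u.length = ((word D' n u.length).flatten).take u.length := by
      rw [← hwin n u.length, word_take, min_eq_left (by omega)]
    obtain ⟨z, hz⟩ := u_pref_flattenRW hmemRW
    have h3 := congrArg (List.take u.length) hz
    rw [List.take_left' rfl, List.take_append,
      Nat.sub_eq_zero_of_le hlenF, List.take_zero, List.append_nil] at h3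
    show word X (S n) u.length = u
    rw [h1, ← h3]
  have hcons : ∀ n p, S n < p → p < S (n + 1) → ¬ OccursAt X u p := by
    intro n p hp1 hp2 hEp
    have hq : 0 < p - S n := by omega
    have hq2 : p - S n < (D' n).length := by
      have := hSsucc n
      omega
    apply RW_no_interior (hD'.1 n) hq hq2
    have happ : D' n ++ u = word X (S n) ((S (n + 1) - S n) + u.length) := by
      rw [word_append, hpiece n, show S n + (S (n + 1) - S n) = S (n + 1) by omega,
        show word X (S (n + 1)) u.length = u from hES (n + 1)]
    rw [happ, word_drop, word_take, min_eq_left (by have := hSsucc n; omega),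
      show S n + (p - S n) = p by omega]
    exact hEp
  have hSe : ∀ n, S n = eS G n := by
    intro n
    induction n with
    | zero => rw [hS0, eS_zero]
    | succ n ih =>
      rw [eS_succ, ← ih]
      refine (nxt_eq G ?_ (hES (n + 1)) (fun p h1 h2 => hcons n p h1 h2)).symm
      have := hSsucc n
      have := hlenpos n
      omega
  intro n
  rw [← hpiece n, DS, hSe (n + 1), hSe n]

lemma fixedpt (G : Good τ X u) {D' : ℕ → List A} (hD' : IsDerived X u D') :
    IsFixedPt (tauu G) D' := by
  have hDD : D' = DS G := funext (derived_eq G hD')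
  rw [hDD]
  intro n
  show word (DS G) 0 _ = _
  rw [flatMap_tauu G 0 n]
  simp

lemma uniq (G : Good τ X u) {tu' : List A → List (List A)} (h' : RetSub τ X u tu')
    {r : List A} (hr : r ∈ ReturnWords X u) : tu' r = tauu G r := by
  obtain ⟨hmem', hfl'⟩ := h' r hr
  have hrr := (RW_iff G).mp hr
  apply UD _ _ hmem' (tauu_flatten G hrr).1
  rw [hfl', (tauu_flatten G hrr).2]

end Tauu

section Helpers
variable {τ : A → List A} {X : ℕ → A} {u : List A} {a : A}

lemma nxt_le (G : Good τ X u) {i j : ℕ} (h1 : i < j) (h2 : OccursAt X u j) :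
    nxt G i ≤ j :=
  @Nat.find_le _ (fun j => i < j ∧ OccursAt X u j) (Classical.decPred _) (G.hnext i) ⟨h1, h2⟩

lemma infix_wordApply_of_mem {σ : A → List A} {b : A} {w : List A} (hb : b ∈ w) :
    σ b <:+: wordApply σ w := by
  obtain ⟨s, t, rfl⟩ := List.append_of_mem hb
  rw [wordApply_append, wordApply_cons]
  exact ⟨wordApply σ s, wordApply σ t, by rw [List.append_assoc]⟩

lemma mPow_prefix (hfix : IsFixedPt τ X) (hX0 : X 0 = a) :
    ∀ m, mPow τ m a = word X 0 (mPow τ m a).length := by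
  intro m
  induction m with
  | zero => simp [hX0]
  | succ m ih =>
    have h : word X 0 (wordApply τ (word X 0 (mPow τ m a).length)).length
        = wordApply τ (word X 0 (mPow τ m a).length) := hfix _
    calc mPow τ (m + 1) a = wordApply τ (word X 0 (mPow τ m a).length) := by
          conv_lhs => rw [mPow_succ, ih]
      _ = word X 0 (wordApply τ (word X 0 (mPow τ m a).length)).length := h.symm
      _ = word X 0 (mPow τ (m + 1) a).length := by conv_rhs => rw [mPow_succ, ih]

lemma len_eq_imp_singleton {σ : A → List A} (hσ : Nonerasing σ) :
    ∀ w : List A, (wordApply σ w).length = w.length → ∀ b ∈ w, (σ b).length = 1 := by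
  intro w
  induction w with
  | nil => intro _ b hb; simp at hb
  | cons c w ih =>
    intro hlen b hb
    rw [wordApply_cons, List.length_append, List.length_cons] at hlen
    have h1 : 1 ≤ (σ c).length := List.length_pos_iff.mpr (hσ c)
    have h2 : w.length ≤ (wordApply σ w).length := wordApply_length_ge hσ w
    rcases List.mem_cons.mp hb with rfl | hb2
    · omega
    · exact ih (by omega) b hb2

lemma growth (hne : Nonerasing τ) (hhead : (τ a).head? = some a) (hX0 : X 0 = a)
    (hfix : IsFixedPt τ X) (hpre : word X 0 u.length = u)
    {k : ℕ} (hk : ∀ b : A, b ∈ mPow τ k a)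
    {i0 : ℕ} (hi0 : ¬ OccursAt X u i0) :
    ∀ N, ∃ m, N ≤ (mPow τ m a).length := by
  by_contra hcon
  push_neg at hcon
  obtain ⟨N, hN⟩ := hcon
  have hmono : ∀ m, (mPow τ m a).length ≤ (mPow τ (m + 1) a).length := by
    intro m
    rw [mPow_succ]
    exact wordApply_length_ge hne _
  have hstall : ∃ m, (mPow τ (m + 1) a).length ≤ (mPow τ m a).length := by
    by_contra h
    push_neg at h
    have hgr : ∀ m, m ≤ (mPow τ m a).length := by
      intro m
      induction m with
      | zero => omega
      | succ m ih =>
        have := h m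
        omega
    have := hgr N
    have := hN N
    omega
  obtain ⟨m, hm⟩ := hstall
  have haw : a ∈ mPow τ m a := by
    have hne2 : mPow τ m a ≠ [] := nonerasing_mPow hne m a
    have hl : 0 < (mPow τ m a).length := List.length_pos_iff.mpr hne2
    rw [mPow_prefix hfix hX0 m]
    exact mem_word.mpr ⟨0, hl, hX0⟩
  have hone : ∀ b ∈ mPow τ m a, (τ b).length = 1 := by
    have hlen : (wordApply τ (mPow τ m a)).length = (mPow τ m a).length := by
      have h2 := wordApply_length_ge hne (mPow τ m a)
      have h3 : (wordApply τ (mPow τ m a)).length ≤ (mPow τ m a).length := by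
        rw [← mPow_succ]
        exact hm
      omega
    exact len_eq_imp_singleton hne _ hlen
  have hta : τ a = [a] := by
    have h1 : (τ a).length = 1 := hone a haw
    cases hτa : τ a with
    | nil => rw [hτa] at h1; simp at h1
    | cons x t =>
      rw [hτa] at h1
      simp only [List.length_cons] at h1
      have ht : t = [] := List.length_eq_zero_iff.mp (by omega)
      rw [hτa, ht] at hhead
      simp only [List.head?_cons, Option.some.injEq] at hhead
      rw [ht, hhead]
  have hpk : ∀ j, mPow τ j a = [a] := by
    intro j
    induction j with
    | zero => rfl
    | succ j ih => rw [mPow_succ, ih, wordApply_singleton, hta]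
  have hAa : ∀ b : A, b = a := by
    intro b
    have hb := hk b
    rw [hpk k] at hb
    simpa using hb
  apply hi0
  show word X i0 u.length = u
  have hcg : word X i0 u.length = word X 0 u.length :=
    word_congr fun t ht => (hAa _).trans (hAa _).symm
  rw [hcg, hpre]

lemma window_occ {σ : A → List A} (hσfix : IsFixedPt σ X) (hσne : Nonerasing σ)
    {v : List A} (hv : ∀ b : A, v <:+: σ b) {M : ℕ} (hM : ∀ b : A, (σ b).length ≤ M) :
    ∀ i, ∃ j, i < j ∧ j ≤ i + 2 * M ∧ word X j v.length = v := by
  intro i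
  have hex : ∃ s, i < phi σ X s := ⟨i + 1, by have := phi_ge hσne X (i + 1); omega⟩
  set s := @Nat.find (fun s => i < phi σ X s) (Classical.decPred _) hex with hs
  have hspec : i < phi σ X s :=
    @Nat.find_spec (fun s => i < phi σ X s) (Classical.decPred _) hex
  have hspos : s ≠ 0 := by
    intro h
    rw [h, phi_zero] at hspec
    omega
  have hprev : ¬ i < phi σ X (s - 1) :=
    @Nat.find_min (fun s => i < phi σ X s) (Classical.decPred _) hex _ (by omega)
  have hsucc : phi σ X s = phi σ X (s - 1) + (σ (X (s - 1))).length := by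
    have h := phi_succ σ X (s - 1)
    rw [show s - 1 + 1 = s by omega] at h
    exact h
  have hbound : phi σ X s ≤ i + M := by
    have := hM (X (s - 1))
    omega
  have hblock : word X (phi σ X s) (phi σ X (s + 1) - phi σ X s) = σ (X s) := by
    have h := image_seg hσfix (i := s) (j := s + 1) (by omega)
    rw [show s + 1 - s = 1 by omega, word_one, wordApply_singleton] at h
    exact h
  have hinf : v <:+: word X (phi σ X s) (phi σ X (s + 1) - phi σ X s) := by
    rw [hblock]
    exact hv _
  obtain ⟨p, hp1, hp2⟩ := occ_of_infix hinf
  have hc : phi σ X (s + 1) - phi σ X s ≤ M := by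
    have := phi_succ σ X s
    have := hM (X s)
    omega
  exact ⟨phi σ X s + p, by omega, by omega, hp2⟩

/-- transplanting a consecutive pair of occurrences -/
lemma pair_transplant (G : Good τ X u) {n' p : ℕ}
    (hw : word X p ((eS G (n' + 1) - eS G n') + u.length)
        = word X (eS G n') ((eS G (n' + 1) - eS G n') + u.length)) :
    ∃ n2, eS G n2 = p ∧ eS G (n2 + 1) = p + (eS G (n' + 1) - eS G n')
      ∧ DS G n2 = DS G n' := by
  set d := eS G (n' + 1) - eS G n' with hd
  have hee : eS G n' < eS G (n' + 1) := eS_strictMono G (Nat.lt_succ_self n')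
  have hdpos : 0 < d := by omega
  have hEp : OccursAt X u p := by
    have h := word_sub hw (p := 0) (q := u.length) (by omega)
    simp only [Nat.add_zero] at h
    show word X p u.length = u
    rw [h]
    exact E_eS G n'
  have hEpd : OccursAt X u (p + d) := by
    have h := word_sub hw (p := d) (q := u.length) (by omega)
    show word X (p + d) u.length = u
    rw [h, show eS G n' + d = eS G (n' + 1) by omega]
    exact E_eS G (n' + 1)
  have hbet : ∀ q, p < q → q < p + d → ¬ OccursAt X u q := by
    intro q hq1 hq2 hEq
    have h := word_sub hw (p := q - p) (q := u.length) (by omega)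
    rw [show p + (q - p) = q by omega] at h
    have hEq2 : OccursAt X u (eS G n' + (q - p)) := by
      show word X (eS G n' + (q - p)) u.length = u
      rw [← h]
      exact hEq
    exact nxt_min G (i := eS G n') (by rw [← eS_succ]; omega) ⟨by omega, hEq2⟩
  obtain ⟨n2, hn2⟩ := E_exists_idx G p hEp
  have hsucc2 : eS G (n2 + 1) = p + d := by
    rw [eS_succ, hn2]
    exact nxt_eq G (by omega) hEpd hbet
  refine ⟨n2, hn2, hsucc2, ?_⟩
  have h := word_sub hw (p := 0) (q := d) (by omega)
  simp only [Nat.add_zero] at h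
  rw [DS, DS, hn2, hsucc2, ← hd, show p + d - p = d by omega, h]

lemma prim_case1 (G : Good τ X u) (hall : ∀ i, OccursAt X u i) :
    PrimitiveOn (tauu G) (ReturnWords X u) := by
  have heS : ∀ n, eS G n = n := by
    intro n
    induction n with
    | zero => rfl
    | succ n ih =>
      rw [eS_succ, ih]
      exact nxt_eq G (Nat.lt_succ_self n) (hall (n + 1)) (fun p h1 h2 => by omega)
  have hDS : ∀ n, DS G n = [X 0] := by
    intro n
    rw [DS, heS (n + 1), heS n, show n + 1 - n = 1 by omega, word_one,
      X_eq_of_E G (hall n)]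
  refine ⟨1, one_pos, ?_⟩
  intro r hr s hs
  obtain ⟨n, rfl⟩ := (RW_iff G).mp hr
  obtain ⟨n', rfl⟩ := (RW_iff G).mp hs
  rw [mPow_tauu G 1 n]
  refine mem_word.mpr ⟨0, ?_, ?_⟩
  · simp only [Function.iterate_one]
    have := psi_strictMono G (show n < n + 1 by omega)
    omega
  · rw [Nat.add_zero, hDS, hDS]

end Helpers
section Iter
variable {τ : A → List A} {X : ℕ → A} {u : List A}

lemma eS_psi_iter (G : Good τ X u) (j n : ℕ) :
    eS G ((psi G)^[j] n) = (phi τ X)^[j] (eS G n) := by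
  induction j with
  | zero => simp
  | succ j ih =>
    rw [Function.iterate_succ_apply', Function.iterate_succ_apply', eS_psi, ih]

end Iter


theorem stmt6 {A : Type*} (τ : A → List A) (a : A) (X : ℕ → A)
    (hne : Nonerasing τ) (hhead : (τ a).head? = some a) (hprim : Primitive τ)
    (hX0 : X 0 = a) (hfix : IsFixedPt τ X)
    (u : List A) (hu : u ≠ []) (hpre : IsPrefix X u) :
    ∃ τu : List A → List (List A),
      RetSub τ X u τu ∧
      PrimitiveOn τu (ReturnWords X u) ∧
      (∃ D : ℕ → List A, IsDerived X u D) ∧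
      (∀ D : ℕ → List A, IsDerived X u D → IsFixedPt τu D) ∧
      (∀ τu' : List A → List (List A), RetSub τ X u τu' →
        ∀ r ∈ ReturnWords X u, τu' r = τu r) := by
  classical
  have hpre' : word X 0 u.length = u := hpre
  by_cases hall : ∀ i, OccursAt X u i
  · have hnext : ∀ i, ∃ j, i < j ∧ OccursAt X u j :=
      fun i => ⟨i + 1, by omega, hall (i + 1)⟩
    have G : Good τ X u := ⟨hne, hpre', hu, hfix, hnext⟩
    exact ⟨tauu G, retsub G, prim_case1 G hall, ⟨DS G, exists_derived G⟩,
      fun D hD => fixedpt G hD, fun tu' h' r hr => uniq G h' hr⟩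
  · push_neg at hall
    obtain ⟨i0, hi0⟩ := hall
    obtain ⟨k, hkpos, hk2⟩ := hprim
    have hka : ∀ b : A, b ∈ mPow τ k a := fun b => hk2 a b
    have hak : ∀ b : A, a ∈ mPow τ k b := fun b => hk2 b a
    haveI hfin : Finite A := Finite.of_surjective
      (fun i : Fin (mPow τ k a).length => (mPow τ k a).get i)
      (fun b => by
        obtain ⟨i, hi⟩ := List.get_of_mem (hka b)
        exact ⟨i, hi⟩)
    letI hFT : Fintype A := Fintype.ofFinite A
    have hgrow : ∀ N, ∃ m, N ≤ (mPow τ m a).length :=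
      growth hne hhead hX0 hfix hpre' hka hi0
    have hLstep : ∀ m, (mPow τ m a).length ≤ (mPow τ (m + 1) a).length := fun m => by
      rw [mPow_succ]
      exact wordApply_length_ge hne _
    obtain ⟨m0, hm0⟩ := hgrow u.length
    have hu_inf : ∀ b : A, u <:+: mPow τ (m0 + k) b := by
      intro b
      have h1 : mPow τ m0 a <:+: mPow τ (m0 + k) b := by
        rw [mPow_add]
        exact infix_wordApply_of_mem (hak b)
      have h2 : u <+: mPow τ m0 a := by
        have h3 := List.take_prefix u.length (word X 0 (mPow τ m0 a).length)
        rw [word_take, min_eq_left hm0, hpre'] at h3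
        rw [mPow_prefix hfix hX0 m0]
        exact h3
      exact h2.isInfix.trans h1
    set M := Finset.univ.sup (fun b : A => (mPow τ (m0 + k) b).length) with hMdef
    have hMle : ∀ b : A, (mPow τ (m0 + k) b).length ≤ M := fun b => by
      rw [hMdef]
      exact Finset.le_sup (f := fun b : A => (mPow τ (m0 + k) b).length)
        (Finset.mem_univ b)
    have hwin := window_occ (σ := mPow τ (m0 + k)) (isFixedPt_mPow hfix (m0 + k))
      (nonerasing_mPow hne (m0 + k)) hu_inf hMle
    have hnext : ∀ i, ∃ j, i < j ∧ OccursAt X u j := by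
      intro i
      obtain ⟨j, h1, h2, h3⟩ := hwin i
      exact ⟨j, h1, h3⟩
    have G : Good τ X u := ⟨hne, hpre', hu, hfix, hnext⟩
    have hgap : ∀ n, eS G (n + 1) - eS G n ≤ 2 * M := by
      intro n
      obtain ⟨j, h1, h2, h3⟩ := hwin (eS G n)
      have h4 := nxt_le G h1 h3
      rw [eS_succ]
      omega
    -- every length-2 factor occurs before a uniform bound P
    have hpair : ∃ P, ∀ s : ℕ, ∃ p, p + 2 ≤ P ∧ word X p 2 = word X s 2 := by
      set f : A × A → ℕ := fun bc =>
        @dite _ (∃ p, word X p 2 = [bc.1, bc.2]) (Classical.dec _)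
          (fun h => Classical.choose h + 2) (fun _ => 0) with hfdef
      refine ⟨Finset.univ.sup f, ?_⟩
      intro s
      have hw2 : word X s 2 = [X s, X (s + 1)] := by
        rw [show (2 : ℕ) = 1 + 1 from rfl, word_append, word_one, word_one]
        rfl
      have hex : ∃ p, word X p 2 = [X s, X (s + 1)] := ⟨s, hw2⟩
      have hfeq : f (X s, X (s + 1)) = Classical.choose hex + 2 := dif_pos hex
      refine ⟨Classical.choose hex, ?_, ?_⟩
      · have hle := Finset.le_sup (f := f) (Finset.mem_univ (X s, X (s + 1)))
        omega
      · rw [Classical.choose_spec hex, hw2]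
    -- every short factor occurs before a uniform bound
    have hfactor : ∀ Λ : ℕ, ∃ C, ∀ c i : ℕ, c ≤ Λ →
        ∃ p, p + c ≤ C ∧ word X p c = word X i c := by
      intro Λ
      obtain ⟨m1, hm1⟩ := hgrow Λ
      obtain ⟨P, hP⟩ := hpair
      obtain ⟨m2, hm2⟩ := hgrow P
      set σ := mPow τ (m1 + k) with hσdef
      have hσfix : IsFixedPt σ X := isFixedPt_mPow hfix _
      have hσne : Nonerasing σ := nonerasing_mPow hne _
      have hbl : ∀ b : A, Λ ≤ (σ b).length := by
        intro b
        have h1 : mPow τ m1 a <:+: σ b := by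
          rw [hσdef, mPow_add]
          exact infix_wordApply_of_mem (hak b)
        exact le_trans hm1 h1.length_le
      refine ⟨phi σ X (mPow τ m2 a).length, ?_⟩
      intro c i hc
      have hex2 : ∃ s, i < phi σ X (s + 1) :=
        ⟨i, by have := phi_ge hσne X (i + 1); omega⟩
      set s := @Nat.find _ (Classical.decPred _) hex2 with hsdef
      have hspec : i < phi σ X (s + 1) := @Nat.find_spec _ (Classical.decPred _) hex2
      have hprev : phi σ X s ≤ i := by
        rcases Nat.eq_zero_or_pos s with h0 | h0
        · rw [h0, phi_zero]
          omega
        · have h5 := @Nat.find_min _ (Classical.decPred _) hex2 (s - 1) (by omega)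
          rw [show s - 1 + 1 = s by omega] at h5
          omega
      have e1 : phi σ X (s + 2) = phi σ X (s + 1) + (σ (X (s + 1))).length := by
        rw [show s + 2 = (s + 1) + 1 by omega]
        exact phi_succ σ X (s + 1)
      have h2b : i + c ≤ phi σ X (s + 2) := by
        have e2 := hbl (X (s + 1))
        omega
      have hseg : word X (phi σ X s) (phi σ X (s + 2) - phi σ X s)
          = wordApply σ (word X s 2) := by
        have h := image_seg hσfix (i := s) (j := s + 2) (by omega)
        rw [show s + 2 - s = 2 by omega] at h
        exact h
      have hv1 : word X i c <:+: wordApply σ (word X s 2) := by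
        rw [← hseg]
        apply word_infix_word hprev
        have := phi_mono σ X (show s ≤ s + 2 by omega)
        omega
      obtain ⟨p2, hp2a, hp2b⟩ := hP s
      have hv2 : wordApply σ (word X s 2)
          <:+: word X 0 (phi σ X (mPow τ m2 a).length) := by
        rw [word_phi hσfix]
        apply wordApply_infix
        rw [← hp2b]
        apply word_infix_word (by omega)
        omega
      obtain ⟨p, hpa, hpb⟩ := occ_of_infix (hv1.trans hv2)
      rw [word_length] at hpa hpb
      rw [Nat.zero_add] at hpb
      exact ⟨p, hpa, hpb⟩
    -- primitivity
    have hprim2 : PrimitiveOn (tauu G) (ReturnWords X u) := by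
      obtain ⟨C, hC⟩ := hfactor (2 * M + u.length)
      obtain ⟨m3, hm3⟩ := hgrow C
      have hLκ : C ≤ (mPow τ (m3 + 1) a).length := le_trans hm3 (hLstep m3)
      refine ⟨m3 + 1, by omega, ?_⟩
      intro r hr s hs
      obtain ⟨n, rfl⟩ := (RW_iff G).mp hr
      obtain ⟨n', rfl⟩ := (RW_iff G).mp hs
      rw [mPow_tauu]
      have hdlen : (eS G (n' + 1) - eS G n') + u.length ≤ 2 * M + u.length := by
        have := hgap n'
        omega
      obtain ⟨p, hp1, hp2⟩ := hC ((eS G (n' + 1) - eS G n') + u.length) (eS G n') hdlen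
      obtain ⟨n1, he1, he2, he3⟩ := pair_transplant G hp2
      set σκ := mPow τ (m3 + 1) with hσκdef
      have hσκfix : IsFixedPt σκ X := isFixedPt_mPow hfix _
      have hXa : X (eS G n) = a := by rw [X_eq_of_E G (E_eS G n), hX0]
      have hlen2 : phi σκ X (eS G n + 1) - phi σκ X (eS G n) = (σκ a).length := by
        rw [phi_succ σκ X (eS G n), hXa]
        omega
      have hblock : word X (phi σκ X (eS G n)) (σκ a).length
          = word X 0 (σκ a).length := by
        have h := image_seg hσκfix (i := eS G n) (j := eS G n + 1) (by omega)
        rw [show eS G n + 1 - eS G n = 1 by omega, word_one, wordApply_singleton,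
          hXa, hlen2] at h
        rw [h]
        exact mPow_prefix hfix hX0 (m3 + 1)
      have hp1' : p + ((eS G (n' + 1) - eS G n') + u.length) ≤ (σκ a).length := by
        have : C ≤ (σκ a).length := hLκ
        omega
      have hd1 : eS G (n1 + 1) - eS G n1 = eS G (n' + 1) - eS G n' := by omega
      have hw2 : word X (phi σκ X (eS G n) + p) ((eS G (n1 + 1) - eS G n1) + u.length)
          = word X (eS G n1) ((eS G (n1 + 1) - eS G n1) + u.length) := by
        rw [hd1, he1]
        have h := word_sub hblock (p := p)
          (q := (eS G (n' + 1) - eS G n') + u.length) (by omega)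
        rw [Nat.zero_add] at h
        rw [h, hp2]
      obtain ⟨n2, hf1, hf2, hf3⟩ := pair_transplant G hw2
      have hnn : eS G ((psi G)^[m3 + 1] n) = phi σκ X (eS G n) := by
        rw [eS_psi_iter, ← phi_iterate hfix]
      have hnn1 : eS G ((psi G)^[m3 + 1] (n + 1)) = phi σκ X (eS G (n + 1)) := by
        rw [eS_psi_iter, ← phi_iterate hfix]
      have ha1 : phi σκ X (eS G n) + (σκ a).length = phi σκ X (eS G n + 1) := by
        have := phi_mono σκ X (show eS G n ≤ eS G n + 1 by omega)
        omega
      have ha2 : phi σκ X (eS G n + 1) ≤ phi σκ X (eS G (n + 1)) :=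
        phi_mono σκ X (eS_strictMono G (Nat.lt_succ_self n))
      have hle1 : (psi G)^[m3 + 1] n ≤ n2 := by
        apply ((eS_strictMono G).le_iff_le).mp
        rw [hnn, hf1]
        omega
      have hle2 : n2 + 1 ≤ (psi G)^[m3 + 1] (n + 1) := by
        apply ((eS_strictMono G).le_iff_le).mp
        rw [hnn1, hf2]
        omega
      refine mem_word.mpr ⟨n2 - (psi G)^[m3 + 1] n, by omega, ?_⟩
      rw [show (psi G)^[m3 + 1] n + (n2 - (psi G)^[m3 + 1] n) = n2 by omega, hf3, he3]
    exact ⟨tauu G, retsub G, hprim2, ⟨DS G, exists_derived G⟩,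
      fun D hD => fixedpt G hD, fun tu' h' r hr => uniq G h' hr⟩

end Cobham
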